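/- Let G = (V, E) be a graph on n vertices with n even, V = {v₀,…,v_{n−1}}. Let G′ be the multigraph on vertices {v₀′,…,v′_{n/2−1}} where each edge v_a v_b ∈ E gives one edge v′_{⌊a/2⌋} v′_{⌊b/2⌋} in G′ labeled with the pair {v_a, v_b} (self-loops and parallel edges allowed). Then the number of perfect matchings of G equals the number of cycle covers C of G′ such that the union of the labels of the edges of C equals V. -/

import Mathlib

/-- For an edge `e` of `G` (on vertex set `Fin (2*k)`), the number of endpoints of
the corresponding edge `v'_{⌊a/2⌋}v'_{⌊b/2⌋}` of `G'` that equal the vertex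
`v'_j`; a self-loop contributes `2`. -/
def endpointCount (k : ℕ) (j : Fin k) (e : Sym2 (Fin (2 * k))) : ℕ :=
  Sym2.lift ⟨fun a b =>
      (if a.val / 2 = j.val then 1 else 0) + (if b.val / 2 = j.val then 1 else 0),
    fun a b => add_comm _ _⟩ e

lemma endpointCount_eq (k : ℕ) (j : Fin k) (e : Sym2 (Fin (2 * k))) (he : ¬ e.IsDiag)
    (u v : Fin (2 * k)) (hu : u.1 = 2 * j.1) (hv : v.1 = 2 * j.1 + 1) :
    endpointCount k j e = (if u ∈ e then 1 else 0) + (if v ∈ e then 1 else 0) := by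
  induction e with
  | _ a b =>
    rw [Sym2.mk_isDiag_iff] at he
    have hab : a.1 ≠ b.1 := fun h => he (Fin.ext h)
    have ha := a.2
    have hb := b.2
    have hj := j.2
    simp only [endpointCount, Sym2.lift_mk, Sym2.mem_iff, Fin.ext_iff]
    split_ifs <;> omega

lemma sum_endpointCount (k : ℕ) (j : Fin k) (C : Finset (Sym2 (Fin (2 * k))))
    (hnd : ∀ e ∈ C, ¬ e.IsDiag)
    (u v : Fin (2 * k)) (hu : u.1 = 2 * j.1) (hv : v.1 = 2 * j.1 + 1) :
    ∑ e ∈ C, endpointCount k j e =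
      (C.filter (fun e => u ∈ e)).card + (C.filter (fun e => v ∈ e)).card := by
  classical
  rw [Finset.sum_congr rfl (fun e he => endpointCount_eq k j e (hnd e he) u v hu hv),
    Finset.sum_add_distrib, Finset.card_filter, Finset.card_filter]

lemma filter_card_one (k : ℕ) (C : Finset (Sym2 (Fin (2 * k))))
    (hnd : ∀ e ∈ C, ¬ e.IsDiag)
    (hdeg : ∀ j : Fin k, ∑ e ∈ C, endpointCount k j e = 2)
    (hcov : ∀ x : Fin (2 * k), ∃ e ∈ C, x ∈ e) (x : Fin (2 * k)) :
    (C.filter (fun e => x ∈ e)).card = 1 := by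
  classical
  have hx := x.2
  have hj : x.1 / 2 < k := by omega
  have hpos : ∀ y : Fin (2 * k), 1 ≤ (C.filter (fun e => y ∈ e)).card := by
    intro y
    obtain ⟨e, he, hye⟩ := hcov y
    exact Finset.card_pos.2 ⟨e, Finset.mem_filter.2 ⟨he, hye⟩⟩
  set u : Fin (2 * k) := ⟨2 * (x.1 / 2), by omega⟩ with hu
  set v : Fin (2 * k) := ⟨2 * (x.1 / 2) + 1, by omega⟩ with hv
  have h := hdeg ⟨x.1 / 2, hj⟩
  rw [sum_endpointCount k _ C hnd u v rfl rfl] at h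
  have h1 := hpos u
  have h2 := hpos v
  rcases (by omega : x.1 = 2 * (x.1 / 2) ∨ x.1 = 2 * (x.1 / 2) + 1) with hc | hc
  · rw [show x = u from Fin.ext hc]; omega
  · rw [show x = v from Fin.ext hc]; omega


/-- Let `G` be a graph on `n = 2k` vertices and let `G'` be the multigraph on
`{v'_0, …, v'_{k-1}}` in which every edge `v_a v_b` of `G` yields one edge
`v'_{⌊a/2⌋} v'_{⌊b/2⌋}` labeled `{v_a, v_b}`.  The number of perfect matchings of
`G` equals the number of cycle covers `C` of `G'` whose labels cover all of `V`.
Since edges of `G'` are in bijection with their labels (edges of `G`), a set of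
edges of `G'` is recorded as a subset `C` of the edges of `G`; the cycle-cover
condition says every vertex `v'_j` has degree exactly `2` in `C`. -/
theorem card_perfectMatchings_eq_card_labelCovering_cycleCovers
    (k : ℕ) (G : SimpleGraph (Fin (2 * k))) :
    ({M : G.Subgraph | M.IsPerfectMatching} : Set G.Subgraph).ncard =
      ({C : Finset (Sym2 (Fin (2 * k))) |
          ↑C ⊆ G.edgeSet ∧
          (∀ j : Fin k, ∑ e ∈ C, endpointCount k j e = 2) ∧
          (∀ x : Fin (2 * k), ∃ e ∈ C, x ∈ e)} :
        Set (Finset (Sym2 (Fin (2 * k))))).ncard := by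
  classical
  set f : G.Subgraph → Finset (Sym2 (Fin (2 * k))) :=
    fun M => (Set.toFinite M.edgeSet).toFinset with hf
  have hfc : ∀ M : G.Subgraph, (f M : Set (Sym2 (Fin (2 * k)))) = M.edgeSet := by
    intro M; exact Set.Finite.coe_toFinset _
  -- image equality
  have himg : f '' {M | M.IsPerfectMatching} =
      {C : Finset (Sym2 (Fin (2 * k))) |
          ↑C ⊆ G.edgeSet ∧
          (∀ j : Fin k, ∑ e ∈ C, endpointCount k j e = 2) ∧
          (∀ x : Fin (2 * k), ∃ e ∈ C, x ∈ e)} := by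
    ext C
    simp only [Set.mem_image, Set.mem_setOf_eq]
    constructor
    · rintro ⟨M, hM, rfl⟩
      have hsub : (f M : Set (Sym2 (Fin (2 * k)))) ⊆ G.edgeSet := by
        rw [hfc]; exact M.edgeSet_subset
      have hmem : ∀ e, e ∈ f M ↔ e ∈ M.edgeSet := by
        intro e; rw [← Finset.mem_coe, hfc]
      have hnd : ∀ e ∈ f M, ¬ e.IsDiag := by
        intro e he
        exact G.not_isDiag_of_mem_edgeSet (hsub he)
      -- each vertex is in exactly one edge
      have huniq : ∀ x : Fin (2 * k), ∃! e, e ∈ f M ∧ x ∈ e := by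
        intro x
        obtain ⟨y, hy, hy'⟩ := hM.1 (hM.2 x)
        refine ⟨s(x, y), ⟨(hmem _).2 ((SimpleGraph.Subgraph.mem_edgeSet).2 hy), by simp⟩, ?_⟩
        rintro e ⟨he, hxe⟩
        obtain ⟨z, rfl⟩ := Sym2.mem_iff_exists.1 hxe
        have := (SimpleGraph.Subgraph.mem_edgeSet).1 ((hmem _).1 he)
        rw [hy' z this]
      refine ⟨hsub, ?_, ?_⟩
      · intro j
        have hj := j.2
        rw [sum_endpointCount k j (f M) hnd ⟨2 * j.1, by omega⟩ ⟨2 * j.1 + 1, by omega⟩ rfl rfl]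
        have hcard : ∀ y : Fin (2 * k), ((f M).filter (fun e => y ∈ e)).card = 1 := by
          intro y
          obtain ⟨e, ⟨he, hye⟩, hu⟩ := huniq y
          rw [Finset.card_eq_one]
          exact ⟨e, Finset.eq_singleton_iff_unique_mem.2
            ⟨Finset.mem_filter.2 ⟨he, hye⟩,
             fun e' he' => hu e' ⟨(Finset.mem_filter.1 he').1, (Finset.mem_filter.1 he').2⟩⟩⟩
        rw [hcard, hcard]
      · intro x
        obtain ⟨e, ⟨he, hxe⟩, _⟩ := huniq x
        exact ⟨e, he, hxe⟩
    · rintro ⟨hsub, hdeg, hcov⟩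
      have hnd : ∀ e ∈ C, ¬ e.IsDiag := fun e he =>
        G.not_isDiag_of_mem_edgeSet (hsub he)
      have hone := filter_card_one k C hnd hdeg hcov
      -- unique edge through each vertex
      have huniq : ∀ x : Fin (2 * k), ∀ e ∈ C, ∀ e' ∈ C, x ∈ e → x ∈ e' → e = e' := by
        intro x e he e' he' hxe hxe'
        have h1 : e ∈ C.filter (fun e => x ∈ e) := Finset.mem_filter.2 ⟨he, hxe⟩
        have h2 : e' ∈ C.filter (fun e => x ∈ e) := Finset.mem_filter.2 ⟨he', hxe'⟩
        obtain ⟨a, ha⟩ := Finset.card_eq_one.1 (hone x)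
        rw [ha, Finset.mem_singleton] at h1 h2
        rw [h1, h2]
      refine ⟨{ verts := Set.univ
                Adj := fun a b => s(a, b) ∈ C
                adj_sub := fun h => (SimpleGraph.mem_edgeSet G).1 (hsub h)
                edge_vert := fun _ => Set.mem_univ _
                symm := ⟨fun a b h => show s(b, a) ∈ C by rwa [Sym2.eq_swap]⟩ }, ?_, ?_⟩
      · constructor
        · intro v _
          obtain ⟨e, he, hve⟩ := hcov v
          obtain ⟨w, rfl⟩ := Sym2.mem_iff_exists.1 hve
          refine ⟨w, he, ?_⟩
          intro y hy
          have := huniq v _ hy _ he (by simp) (by simp)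
          exact (Sym2.congr_right.1 this).symm ▸ rfl
        · intro v; exact Set.mem_univ v
      · simp only [hf]
        apply Finset.coe_injective
        rw [Set.Finite.coe_toFinset]
        ext e
        induction e with
        | _ a b => simp [SimpleGraph.Subgraph.mem_edgeSet]
  rw [← himg]
  rw [Set.ncard_image_of_injOn]
  intro M hM M' hM' hMM'
  have hedge : M.edgeSet = M'.edgeSet := by
    rw [← hfc M, ← hfc M', hMM']
  ext a b
  · rw [hM.2.verts_eq_univ, hM'.2.verts_eq_univ]
  · rw [← SimpleGraph.Subgraph.mem_edgeSet, ← SimpleGraph.Subgraph.mem_edgeSet, hedge]
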